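/- arXiv:2601.05526 — 6 statements merged into one kernel-verified Lean document; each statement's English description precedes it below -/
import Mathlib

section
/- Let G be an n×n real matrix and P an n×n symmetric positive definite matrix such that P·G + Gᵀ·P ≻ 0. Then for the one-parameter group d(s) = exp(s·G) and the norm ‖x‖ = √(xᵀ P x), there exists β > 0 such that ‖d(s)‖ ≤ e^{β s} for all s ≤ 0, where ‖d(s)‖ is the operator norm induced by ‖·‖. -/
open Matrix

/-- The weighted Euclidean norm `‖x‖ = √(xᵀ P x)`. -/
noncomputable def wnorm {n : ℕ} (P : Matrix (Fin n) (Fin n) ℝ) (x : Fin n → ℝ) : ℝ :=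
  Real.sqrt (x ⬝ᵥ P.mulVec x)

/-- The operator norm induced by the weighted Euclidean norm `wnorm P`. -/
noncomputable def wopNorm {n : ℕ} (P A : Matrix (Fin n) (Fin n) ℝ) : ℝ :=
  sSup {c : ℝ | ∃ x : Fin n → ℝ, x ≠ 0 ∧ c = wnorm P (A.mulVec x) / wnorm P x}

section Aux

lemma quad_cont {n : ℕ} (A : Matrix (Fin n) (Fin n) ℝ) :
    Continuous fun v : Fin n → ℝ => v ⬝ᵥ A.mulVec v := by
  simp only [dotProduct, Matrix.mulVec, dotProduct]
  fun_prop

lemma quad_smul {n : ℕ} (A : Matrix (Fin n) (Fin n) ℝ) (c : ℝ) (v : Fin n → ℝ) :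
    (c • v) ⬝ᵥ A.mulVec (c • v) = c^2 * (v ⬝ᵥ A.mulVec v) := by
  rw [A.mulVec_smul, smul_dotProduct, dotProduct_smul]
  simp [smul_smul, sq]; ring

lemma exists_beta {n : ℕ} (P Q : Matrix (Fin n) (Fin n) ℝ) (hP : P.PosDef) (hQ : Q.PosDef) :
    ∃ β > 0, ∀ x : Fin n → ℝ, 2 * β * (x ⬝ᵥ P.mulVec x) ≤ x ⬝ᵥ Q.mulVec x := by
  rcases Nat.eq_zero_or_pos n with h0 | hn
  · subst h0
    exact ⟨1, one_pos, fun x => by simp [dotProduct]⟩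
  · have : Nontrivial (Fin n → ℝ) := by
      have : Nonempty (Fin n) := ⟨⟨0, hn⟩⟩
      infer_instance
    obtain ⟨v₀, hv₀⟩ := exists_norm_eq (Fin n → ℝ) (zero_le_one)
    have hS : IsCompact (Metric.sphere (0:Fin n → ℝ) 1) := isCompact_sphere 0 1
    have hne : (Metric.sphere (0:Fin n → ℝ) 1).Nonempty := ⟨v₀, by simp [hv₀]⟩
    obtain ⟨vm, hvmS, hvm⟩ := hS.exists_isMinOn hne (quad_cont Q).continuousOn
    obtain ⟨vM, hvMS, hvM⟩ := hS.exists_isMaxOn hne (quad_cont P).continuousOn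
    have hvm0 : vm ≠ 0 := by
      intro h; rw [h] at hvmS; simp at hvmS
    have hvM0 : vM ≠ 0 := by
      intro h; rw [h] at hvMS; simp at hvMS
    have hm : 0 < vm ⬝ᵥ Q.mulVec vm := hQ.dotProduct_mulVec_pos hvm0
    have hM : 0 < vM ⬝ᵥ P.mulVec vM := hP.dotProduct_mulVec_pos hvM0
    set m := vm ⬝ᵥ Q.mulVec vm
    set M := vM ⬝ᵥ P.mulVec vM
    refine ⟨m / (2 * M), by positivity, fun x => ?_⟩
    rcases eq_or_ne x 0 with rfl | hx
    · simp
    · have hxn : ‖x‖ ≠ 0 := norm_ne_zero_iff.2 hx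
      set v := ‖x‖⁻¹ • x with hv
      have hvS : v ∈ Metric.sphere (0:Fin n → ℝ) 1 := by
        simp [hv, norm_smul, abs_of_nonneg (inv_nonneg.2 (norm_nonneg x)), inv_mul_cancel₀ hxn]
      have eQ : v ⬝ᵥ Q.mulVec v = ‖x‖⁻¹^2 * (x ⬝ᵥ Q.mulVec x) := quad_smul Q _ x
      have eP : v ⬝ᵥ P.mulVec v = ‖x‖⁻¹^2 * (x ⬝ᵥ P.mulVec x) := quad_smul P _ x
      have h1 : m ≤ v ⬝ᵥ Q.mulVec v := hvm hvS
      have h2 : v ⬝ᵥ P.mulVec v ≤ M := hvM hvS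
      have key : (m / M) * (v ⬝ᵥ P.mulVec v) ≤ v ⬝ᵥ Q.mulVec v := by
        calc (m / M) * (v ⬝ᵥ P.mulVec v) ≤ (m / M) * M := by
              apply mul_le_mul_of_nonneg_left h2 (by positivity)
          _ = m := by field_simp
          _ ≤ _ := h1
      rw [eP, eQ] at key
      have hh : ‖x‖^2 * ‖x‖⁻¹^2 = 1 := by
        rw [← mul_pow, mul_inv_cancel₀ hxn, one_pow]
      have goal' : m / M * (x ⬝ᵥ P.mulVec x) ≤ x ⬝ᵥ Q.mulVec x := by
        have hmul := mul_le_mul_of_nonneg_left key (sq_nonneg ‖x‖)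
        nlinarith [hmul, hh]
      have h2β : 2 * (m / (2 * M)) = m / M := by field_simp
      rw [h2β]
      exact goal'

attribute [local instance] Matrix.linftyOpNormedAddCommGroup Matrix.linftyOpNormedRing
  Matrix.linftyOpNormedAlgebra

noncomputable def mulVecCLM {n : ℕ} (x : Fin n → ℝ) :
    Matrix (Fin n) (Fin n) ℝ →L[ℝ] (Fin n → ℝ) :=
  LinearMap.toContinuousLinearMap
    { toFun := fun A => A.mulVec x
      map_add' := fun A B => Matrix.add_mulVec A B x
      map_smul' := fun c A => Matrix.smul_mulVec c A x }

lemma hasDerivAt_expVec {n : ℕ} (G : Matrix (Fin n) (Fin n) ℝ) (x : Fin n → ℝ) (s : ℝ) :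
    HasDerivAt (fun t : ℝ => (NormedSpace.exp (t • G)).mulVec x)
      (G.mulVec ((NormedSpace.exp (s • G)).mulVec x)) s := by
  have h1 := hasDerivAt_exp_smul_const (𝕂 := ℝ) G s
  have h2 := (mulVecCLM x).hasFDerivAt.comp_hasDerivAt s h1
  have h3 : NormedSpace.exp (s • G) * G = G * NormedSpace.exp (s • G) := by
    have := ((Commute.refl G).smul_right s).exp_right
    exact this.symm.eq
  have e : (mulVecCLM x) (NormedSpace.exp (s • G) * G) = G.mulVec ((NormedSpace.exp (s • G)).mulVec x) := by
    show (NormedSpace.exp (s • G) * G).mulVec x = _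
    rw [h3, ← Matrix.mulVec_mulVec]
  exact h2.congr_deriv e

lemma hasDerivAt_quad {n : ℕ} (P : Matrix (Fin n) (Fin n) ℝ) {u : ℝ → Fin n → ℝ}
    {u' : Fin n → ℝ} {s : ℝ} (hu : HasDerivAt u u' s) :
    HasDerivAt (fun t => u t ⬝ᵥ P.mulVec (u t))
      (u' ⬝ᵥ P.mulVec (u s) + u s ⬝ᵥ P.mulVec u') s := by
  have hc : ∀ i, HasDerivAt (fun t => u t i) (u' i) s := fun i => hasDerivAt_pi.1 hu i
  have key : HasDerivAt (fun t => ∑ i, ∑ j, u t i * (P i j * u t j))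
      (∑ i, ∑ j, (u' i * (P i j * u s j) + u s i * (P i j * u' j))) s :=
    HasDerivAt.fun_sum fun i _ => HasDerivAt.fun_sum fun j _ =>
      (hc i).fun_mul ((hc j).const_mul (P i j))
  have e1 : (fun t => u t ⬝ᵥ P.mulVec (u t)) = fun t => ∑ i, ∑ j, u t i * (P i j * u t j) := by
    funext t; simp [dotProduct, Matrix.mulVec, Finset.mul_sum]
  have e2 : u' ⬝ᵥ P.mulVec (u s) + u s ⬝ᵥ P.mulVec u'
      = ∑ i, ∑ j, (u' i * (P i j * u s j) + u s i * (P i j * u' j)) := by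
    simp [dotProduct, Matrix.mulVec, Finset.mul_sum, Finset.sum_add_distrib]
  rw [e1, e2]; exact key

/-- The key Grönwall-type estimate. -/
lemma estimate {n : ℕ} (G P : Matrix (Fin n) (Fin n) ℝ) (β : ℝ)
    (hkey : ∀ y : Fin n → ℝ,
      2 * β * (y ⬝ᵥ P.mulVec y) ≤ y ⬝ᵥ (P * G + Gᵀ * P).mulVec y)
    (x : Fin n → ℝ) (s : ℝ) (hs : s ≤ 0) :
    wnorm P ((NormedSpace.exp (s • G)).mulVec x) ≤ Real.exp (β * s) * wnorm P x := by
  set v : ℝ → Fin n → ℝ := fun t => (NormedSpace.exp (t • G)).mulVec x with hvdef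
  set φ : ℝ → ℝ := fun t => v t ⬝ᵥ P.mulVec (v t) with hφdef
  have hv : ∀ t, HasDerivAt v (G.mulVec (v t)) t := fun t => hasDerivAt_expVec G x t
  have hφ : ∀ t, HasDerivAt φ (v t ⬝ᵥ (P * G + Gᵀ * P).mulVec (v t)) t := by
    intro t
    have h := hasDerivAt_quad P (hv t)
    have e : G.mulVec (v t) ⬝ᵥ P.mulVec (v t) + v t ⬝ᵥ P.mulVec (G.mulVec (v t))
        = v t ⬝ᵥ (P * G + Gᵀ * P).mulVec (v t) := by
      rw [Matrix.add_mulVec, dotProduct_add, ← Matrix.mulVec_mulVec,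
        ← Matrix.mulVec_mulVec, Matrix.dotProduct_mulVec (v t) Gᵀ,
        Matrix.vecMul_transpose]
      ring
    rw [← e]; exact h
  set ψ : ℝ → ℝ := fun t => Real.exp (-(2 * β) * t) * φ t with hψdef
  have hψ : ∀ t, HasDerivAt ψ
      (Real.exp (-(2 * β) * t) * (-(2 * β)) * φ t
        + Real.exp (-(2 * β) * t) * (v t ⬝ᵥ (P * G + Gᵀ * P).mulVec (v t))) t := by
    intro t
    simpa only [id_eq, mul_one] using (((hasDerivAt_id t).const_mul (-(2 * β))).exp).fun_mul (hφ t)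
  have hmono : Monotone ψ := by
    apply monotone_of_deriv_nonneg (fun t => (hψ t).differentiableAt)
    intro t
    rw [(hψ t).deriv]
    have h1 := hkey (v t)
    have h2 : (0:ℝ) ≤ Real.exp (-(2 * β) * t) := (Real.exp_pos _).le
    nlinarith [mul_le_mul_of_nonneg_left h1 h2]
  have hψ0 : ψ 0 = x ⬝ᵥ P.mulVec x := by
    simp [hψdef, hφdef, hvdef, NormedSpace.exp_zero, Matrix.one_mulVec]
  have hle : ψ s ≤ x ⬝ᵥ P.mulVec x := hψ0 ▸ hmono hs
  have hφs : φ s ≤ Real.exp (2 * β * s) * (x ⬝ᵥ P.mulVec x) := by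
    have h2 : Real.exp (2 * β * s) * Real.exp (-(2 * β) * s) = 1 := by
      rw [← Real.exp_add]; ring_nf; exact Real.exp_zero
    have := mul_le_mul_of_nonneg_left hle (Real.exp_pos (2 * β * s)).le
    calc φ s = (Real.exp (2 * β * s) * Real.exp (-(2 * β) * s)) * φ s := by rw [h2]; ring
      _ = Real.exp (2 * β * s) * ψ s := by rw [hψdef]; ring
      _ ≤ Real.exp (2 * β * s) * (x ⬝ᵥ P.mulVec x) := this
  have hsqrt : Real.sqrt (Real.exp (2 * β * s) * (x ⬝ᵥ P.mulVec x))
      = Real.exp (β * s) * Real.sqrt (x ⬝ᵥ P.mulVec x) := by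
    rw [Real.sqrt_mul (Real.exp_pos _).le]
    congr 1
    rw [show (2 : ℝ) * β * s = β * s + β * s by ring, Real.exp_add, ← sq,
      Real.sqrt_sq (Real.exp_pos _).le]
  calc wnorm P ((NormedSpace.exp (s • G)).mulVec x) = Real.sqrt (φ s) := rfl
    _ ≤ Real.sqrt (Real.exp (2 * β * s) * (x ⬝ᵥ P.mulVec x)) := Real.sqrt_le_sqrt hφs
    _ = Real.exp (β * s) * wnorm P x := hsqrt

end Aux

/-- Strict monotonicity of the dilation `d(s) = exp(sG)`: if `P ≻ 0` is symmetric and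
`P G + Gᵀ P ≻ 0`, then there is `β > 0` with `‖d(s)‖ ≤ e^{β s}` for all `s ≤ 0`,
the operator norm being induced by `‖x‖ = √(xᵀ P x)`. -/
theorem dilation_strictly_monotone {n : ℕ} (G P : Matrix (Fin n) (Fin n) ℝ)
    (hPsym : Pᵀ = P) (hP : P.PosDef) (hPG : (P * G + Gᵀ * P).PosDef) :
    ∃ β > 0, ∀ s : ℝ, s ≤ 0 →
      wopNorm P (NormedSpace.exp (s • G)) ≤ Real.exp (β * s) := by
  obtain ⟨β, hβ, hkey⟩ := exists_beta P (P * G + Gᵀ * P) hP hPG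
  refine ⟨β, hβ, fun s hs => ?_⟩
  apply Real.sSup_le _ (Real.exp_pos _).le
  rintro c ⟨x, hx, rfl⟩
  have hwx : 0 < wnorm P x := Real.sqrt_pos.2 (hP.dotProduct_mulVec_pos hx)
  rw [div_le_iff₀ hwx]
  exact estimate G P β hkey x s hs
end

section
/- Let d be a one-parameter group of invertible linear maps on ℝⁿ, strictly monotone with respect to a norm ‖·‖, and let ‖·‖_d be the canonical homogeneous norm defined by ‖x‖_d = e^s where s is the unique real with ‖d(−s)x‖ = 1 (for x ≠ 0) and ‖0‖_d = 0. If η̲ and η̄ are the monotonicity constants (0 < η̲ ≤ η̄) from the operator-norm bounds e^{η̲ s} ≤ |⌊d(s)⌋| and ‖d(s)‖ ≤ e^{η̄ s} for s ≥ 0, then for all x with ‖x‖ ≥ 1 one has ‖x‖_d^{η̲} ≤ ‖x‖ ≤ ‖x‖_d^{η̄}, and for all x with ‖x‖ ≤ 1 one has ‖x‖_d^{η̄} ≤ ‖x‖ ≤ ‖x‖_d^{η̲}. -/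
open Matrix

/-- Relation between the canonical homogeneous norm `hnorm = ‖·‖_d` and the underlying
norm `N = ‖·‖` for a strictly monotone one-parameter group of invertible linear maps
`d`, with monotonicity constants `0 < η̲ ≤ η̄`:
for `‖x‖ ≥ 1`, `‖x‖_d^η̲ ≤ ‖x‖ ≤ ‖x‖_d^η̄`, and for `‖x‖ ≤ 1`,
`‖x‖_d^η̄ ≤ ‖x‖ ≤ ‖x‖_d^η̲`. -/
theorem hom_norm_vs_norm {n : ℕ} (d : ℝ → Matrix (Fin n) (Fin n) ℝ)
    (hd0 : d 0 = 1) (hdadd : ∀ s t : ℝ, d (s + t) = d s * d t)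
    (hdinv : ∀ s : ℝ, IsUnit (d s))
    (N : (Fin n → ℝ) → ℝ)
    (hN0 : ∀ x : Fin n → ℝ, N x = 0 ↔ x = 0) (hNpos : ∀ x : Fin n → ℝ, 0 ≤ N x)
    (hnorm : (Fin n → ℝ) → ℝ)
    (hhnorm0 : hnorm 0 = 0)
    (hhnorm : ∀ x : Fin n → ℝ, x ≠ 0 →
      0 < hnorm x ∧ N ((d (-(Real.log (hnorm x)))).mulVec x) = 1)
    (ηund ηbar : ℝ) (h0 : 0 < ηund) (hle : ηund ≤ ηbar)
    (hlower : ∀ s : ℝ, 0 ≤ s → ∀ x : Fin n → ℝ,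
      Real.exp (ηund * s) * N x ≤ N ((d s).mulVec x))
    (hupper : ∀ s : ℝ, 0 ≤ s → ∀ x : Fin n → ℝ,
      N ((d s).mulVec x) ≤ Real.exp (ηbar * s) * N x) :
    ∀ x : Fin n → ℝ,
      (1 ≤ N x → Real.rpow (hnorm x) ηund ≤ N x ∧ N x ≤ Real.rpow (hnorm x) ηbar) ∧
      (N x ≤ 1 → Real.rpow (hnorm x) ηbar ≤ N x ∧ N x ≤ Real.rpow (hnorm x) ηund) := by

  intro x
  by_cases hx : x = 0
  · subst hx
    have hN0' : N 0 = 0 := (hN0 0).mpr rfl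
    constructor
    · intro h; linarith
    · intro _
      rw [hhnorm0, hN0']
      rw [show Real.rpow 0 ηbar = (0:ℝ) ^ ηbar from rfl,
        show Real.rpow 0 ηund = (0:ℝ) ^ ηund from rfl,
        Real.zero_rpow (by linarith : ηbar ≠ 0), Real.zero_rpow (ne_of_gt h0)]
      exact ⟨le_refl 0, le_refl 0⟩
  · obtain ⟨hpos, hone⟩ := hhnorm x hx
    set s := Real.log (hnorm x) with hs
    set y := (d (-s)).mulVec x with hy
    have hxy : (d s).mulVec y = x := by
      rw [hy, Matrix.mulVec_mulVec, ← hdadd, add_neg_cancel, hd0, Matrix.one_mulVec]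
    have hrpow : ∀ η : ℝ, Real.rpow (hnorm x) η = Real.exp (η * s) := by
      intro η
      rw [show Real.rpow (hnorm x) η = (hnorm x) ^ η from rfl,
        Real.rpow_def_of_pos hpos, ← hs, mul_comm]
    constructor
    · intro hNx
      have hs0 : 0 ≤ s := by
        by_contra hneg
        push_neg at hneg
        have h1 := hlower (-s) (by linarith) x
        rw [← hy, hone] at h1
        have h2 : (1:ℝ) < Real.exp (ηund * -s) := by
          rw [← Real.exp_zero]
          exact Real.exp_lt_exp.mpr (by nlinarith)
        nlinarith [Real.exp_pos (ηund * -s)]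
      constructor
      · have h1 := hlower s hs0 y
        rw [hxy, hone, mul_one] at h1
        rw [hrpow]; exact h1
      · have h1 := hupper s hs0 y
        rw [hxy, hone, mul_one] at h1
        rw [hrpow]; exact h1
    · intro hNx
      have hs0 : s ≤ 0 := by
        by_contra hneg
        push_neg at hneg
        have h1 := hlower s (le_of_lt hneg) y
        rw [hxy, hone, mul_one] at h1
        have h2 : (1:ℝ) < Real.exp (ηund * s) := by
          rw [← Real.exp_zero]
          exact Real.exp_lt_exp.mpr (by nlinarith)
        linarith
      have h1 := hlower (-s) (by linarith) x
      rw [← hy, hone] at h1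
      have h2 := hupper (-s) (by linarith) x
      rw [← hy, hone] at h2
      constructor
      · rw [hrpow]
        have e1 : Real.exp (ηbar * -s) * Real.exp (ηbar * s) = 1 := by
          rw [← Real.exp_add]; ring_nf; exact Real.exp_zero
        nlinarith [Real.exp_pos (ηbar * -s), Real.exp_pos (ηbar * s)]
      · rw [hrpow]
        have e1 : Real.exp (ηund * -s) * Real.exp (ηund * s) = 1 := by
          rw [← Real.exp_add]; ring_nf; exact Real.exp_zero
        nlinarith [Real.exp_pos (ηund * -s), Real.exp_pos (ηund * s)]
end

section
/- Let d(s) = exp(sG) be a strictly monotone linear dilation with canonical homogeneous norm ‖·‖_d induced by ‖x‖ = √(xᵀPx). Define Φ_d(x) = ‖x‖_d · d(−ln‖x‖_d)·x for x ≠ 0 and Φ_d(0) = 0, and Ψ(z) = ‖z‖^{-1} · d(ln‖z‖)·z for z ≠ 0, Ψ(0) = 0. Then Ψ(Φ_d(x)) = x for all x ∈ ℝⁿ and Φ_d(Ψ(z)) = z for all z ∈ ℝⁿ; i.e., Φ_d is a bijection of ℝⁿ with inverse Ψ. -/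
open Matrix

/-- The homogeneous coordinate map `Φ_d(x) = ‖x‖_d · d(−ln‖x‖_d)·x`, `Φ_d(0)=0`. -/
noncomputable def Phi {n : ℕ} (G : Matrix (Fin n) (Fin n) ℝ)
    (hnorm : (Fin n → ℝ) → ℝ) (x : Fin n → ℝ) : Fin n → ℝ :=
  if x = 0 then 0 else
    hnorm x • (NormedSpace.exp ((-Real.log (hnorm x)) • G)).mulVec x

/-- The inverse map `Ψ(z) = ‖z‖⁻¹ · d(ln‖z‖)·z`, `Ψ(0)=0`. -/
noncomputable def Psi {n : ℕ} (G P : Matrix (Fin n) (Fin n) ℝ) (z : Fin n → ℝ) :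
    Fin n → ℝ :=
  if z = 0 then 0 else
    (wnorm P z)⁻¹ • (NormedSpace.exp ((Real.log (wnorm P z)) • G)).mulVec z

lemma exp_smul_mul_exp_neg_smul {n : ℕ} (G : Matrix (Fin n) (Fin n) ℝ) (a : ℝ) :
    NormedSpace.exp (a • G) * NormedSpace.exp ((-a) • G) = 1 := by
  have h := Matrix.exp_add_of_commute (a • G) ((-a) • G)
    (((Commute.refl G).smul_right (-a)).smul_left a)
  rw [← h]
  simp

lemma exp_mulVec_cancel {n : ℕ} (G : Matrix (Fin n) (Fin n) ℝ) (a : ℝ) (x : Fin n → ℝ) :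
    (NormedSpace.exp (a • G)).mulVec ((NormedSpace.exp ((-a) • G)).mulVec x) = x := by
  rw [mulVec_mulVec, exp_smul_mul_exp_neg_smul, one_mulVec]

lemma exp_mulVec_cancel' {n : ℕ} (G : Matrix (Fin n) (Fin n) ℝ) (a : ℝ) (x : Fin n → ℝ) :
    (NormedSpace.exp ((-a) • G)).mulVec ((NormedSpace.exp (a • G)).mulVec x) = x := by
  have := exp_mulVec_cancel G (-a) x
  simpa using this

lemma wnorm_smul {n : ℕ} (P : Matrix (Fin n) (Fin n) ℝ) (c : ℝ) (v : Fin n → ℝ) :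
    wnorm P (c • v) = |c| * wnorm P v := by
  unfold wnorm
  rw [mulVec_smul, smul_dotProduct, dotProduct_smul, smul_eq_mul, smul_eq_mul, ← mul_assoc,
    Real.sqrt_mul (mul_self_nonneg c), Real.sqrt_mul_self_eq_abs]

lemma wnorm_pos {n : ℕ} {P : Matrix (Fin n) (Fin n) ℝ} (hP : P.PosDef)
    {v : Fin n → ℝ} (hv : v ≠ 0) : 0 < wnorm P v :=
  Real.sqrt_pos.mpr (by simpa using hP.dotProduct_mulVec_pos hv)

/-- `Φ_d` is a bijection of ℝⁿ with inverse `Ψ`: `Ψ ∘ Φ_d = id` and `Φ_d ∘ Ψ = id`,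
for a strictly monotone dilation `d(s) = exp(sG)` and its canonical homogeneous
norm `hnorm = ‖·‖_d` induced by `‖x‖ = √(xᵀPx)`. -/
theorem Phi_bijective {n : ℕ} (G P : Matrix (Fin n) (Fin n) ℝ)
    (hPsym : Pᵀ = P) (hP : P.PosDef)
    (hnorm : (Fin n → ℝ) → ℝ)
    (hhnorm0 : hnorm 0 = 0)
    (hhnormpos : ∀ x : Fin n → ℝ, x ≠ 0 → 0 < hnorm x)
    (hhnormdef : ∀ x : Fin n → ℝ, x ≠ 0 →
      wnorm P ((NormedSpace.exp ((-Real.log (hnorm x)) • G)).mulVec x) = 1)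
    (hhnormuniq : ∀ x : Fin n → ℝ, x ≠ 0 → ∀ s : ℝ,
      wnorm P ((NormedSpace.exp ((-s) • G)).mulVec x) = 1 → s = Real.log (hnorm x))
    (hhom : ∀ (s : ℝ) (x : Fin n → ℝ),
      hnorm ((NormedSpace.exp (s • G)).mulVec x) = Real.exp s * hnorm x) :
    (∀ x : Fin n → ℝ, Psi G P (Phi G hnorm x) = x) ∧
    (∀ z : Fin n → ℝ, Phi G hnorm (Psi G P z) = z) := by
  constructor
  · -- Ψ ∘ Φ = id
    intro x
    by_cases hx : x = 0
    · subst hx; simp [Phi, Psi]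
    · have hpos := hhnormpos x hx
      rw [Phi, if_neg hx]
      set a := Real.log (hnorm x) with ha
      set y := hnorm x • (NormedSpace.exp ((-a) • G)).mulVec x with hy
      -- wnorm of y
      have hwy : wnorm P y = hnorm x := by
        rw [hy, wnorm_smul, hhnormdef x hx, mul_one, abs_of_pos hpos]
      have hy0 : y ≠ 0 := by
        intro h
        rw [h] at hwy
        have : wnorm P (0 : Fin n → ℝ) = 0 := by simp [wnorm]
        rw [this] at hwy
        exact absurd hwy.symm (ne_of_gt hpos)
      rw [Psi, if_neg hy0, hwy]
      rw [hy, mulVec_smul, smul_smul, inv_mul_cancel₀ (ne_of_gt hpos), one_smul]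
      exact exp_mulVec_cancel G a x
  · -- Φ ∘ Ψ = id
    intro z
    by_cases hz : z = 0
    · subst hz; simp [Phi, Psi]
    · have hw := wnorm_pos hP hz
      rw [Psi, if_neg hz]
      set w := wnorm P z with hwdef
      set y := w⁻¹ • (NormedSpace.exp ((Real.log w) • G)).mulVec z with hy
      have hy0 : y ≠ 0 := by
        intro h
        have : (NormedSpace.exp ((Real.log w) • G)).mulVec z = 0 := by
          have := congrArg (fun v => w • v) h
          simpa [hy, smul_smul, mul_inv_cancel₀ (ne_of_gt hw)] using this
        have hzz := congrArg (fun v => (NormedSpace.exp ((-Real.log w) • G)).mulVec v) this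
        simp only [mulVec_zero] at hzz
        rw [exp_mulVec_cancel' G (Real.log w) z] at hzz
        exact hz hzz
      -- hnorm y = w, via uniqueness with s = log w
      have hkey : wnorm P ((NormedSpace.exp ((-Real.log w) • G)).mulVec y) = 1 := by
        rw [hy, mulVec_smul, exp_mulVec_cancel' G (Real.log w) z, wnorm_smul,
          abs_of_pos (inv_pos.mpr hw), ← hwdef, inv_mul_cancel₀ (ne_of_gt hw)]
      have hlog : Real.log w = Real.log (hnorm y) := hhnormuniq y hy0 _ hkey
      have hny : hnorm y = w := by
        have h1 : Real.exp (Real.log w) = Real.exp (Real.log (hnorm y)) := by rw [hlog]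
        rwa [Real.exp_log hw, Real.exp_log (hhnormpos y hy0), eq_comm] at h1
      rw [Phi, if_neg hy0, hny]
      rw [hy, mulVec_smul, exp_mulVec_cancel' G (Real.log w) z, smul_smul,
        mul_inv_cancel₀ (ne_of_gt hw), one_smul]
end

section
/- Let Φ_d be the homogeneous coordinate homeomorphism associated to a strictly monotone linear dilation d. Define scalar multiplication on ℝⁿ by λ ⋆ x = sign(λ)·d(ln|λ|)·x (and 0 ⋆ x = 0). Then Φ_d(λ ⋆ x) = λ·Φ_d(x) for all λ ∈ ℝ and x ∈ ℝⁿ. -/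
open Matrix

/-- Homogeneous scalar multiplication `λ ⋆ x = sign(λ)·d(ln|λ|)·x`, `0 ⋆ x = 0`. -/
noncomputable def hsmul {n : ℕ} (G : Matrix (Fin n) (Fin n) ℝ) (l : ℝ)
    (x : Fin n → ℝ) : Fin n → ℝ :=
  if l = 0 then 0 else
    (if 0 < l then (1 : ℝ) else -1) • (NormedSpace.exp ((Real.log |l|) • G)).mulVec x

lemma expG_mulVec_ne {n : ℕ} (G : Matrix (Fin n) (Fin n) ℝ) (s : ℝ)
    (x : Fin n → ℝ) (hx : x ≠ 0) : (NormedSpace.exp (s • G)).mulVec x ≠ 0 := by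
  intro h
  apply hx
  have key : (NormedSpace.exp ((-s) • G) * NormedSpace.exp (s • G)).mulVec x = 0 := by
    rw [← Matrix.mulVec_mulVec, h, Matrix.mulVec_zero]
  rwa [← Matrix.exp_add_of_commute _ _ (by
      simpa using (Commute.refl G).smul_left (-s) |>.smul_right s),
    neg_smul, neg_add_cancel, NormedSpace.exp_zero, Matrix.one_mulVec] at key

/-- The homogeneous scalar multiplication is conjugate via `Φ_d` to ordinary scalar
multiplication: `Φ_d(λ ⋆ x) = λ·Φ_d(x)`. -/
theorem Phi_hsmul {n : ℕ} (G : Matrix (Fin n) (Fin n) ℝ)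
    (hnorm : (Fin n → ℝ) → ℝ)
    (hhnorm0 : hnorm 0 = 0)
    (hhnormpos : ∀ x : Fin n → ℝ, x ≠ 0 → 0 < hnorm x)
    (hhnormneg : ∀ x : Fin n → ℝ, hnorm (-x) = hnorm x)
    (hhom : ∀ (s : ℝ) (x : Fin n → ℝ),
      hnorm ((NormedSpace.exp (s • G)).mulVec x) = Real.exp s * hnorm x) :
    ∀ (l : ℝ) (x : Fin n → ℝ), Phi G hnorm (hsmul G l x) = l • Phi G hnorm x := by
  intro l x
  rcases eq_or_ne l 0 with rfl | hl
  · simp [hsmul, Phi]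
  rcases eq_or_ne x 0 with rfl | hx
  · simp [hsmul, Phi, Matrix.mulVec_zero, hl]
  -- notation
  set ε : ℝ := if 0 < l then (1 : ℝ) else -1 with hε
  have hεl : ε * |l| = l := by
    rcases lt_or_ge 0 l with h | h
    · simp [hε, h, abs_of_pos h]
    · have h' : ¬ (0 < l) := not_lt.mpr h
      simp [hε, h', abs_of_nonpos h]
  have hlabs : (0:ℝ) < |l| := abs_pos.mpr hl
  set s : ℝ := Real.log |l| with hs
  set E : Matrix (Fin n) (Fin n) ℝ := NormedSpace.exp (s • G) with hE
  have hEx : E.mulVec x ≠ 0 := expG_mulVec_ne G s x hx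
  have hy : hsmul G l x = ε • E.mulVec x := by rw [hsmul, if_neg hl]
  have hyne : hsmul G l x ≠ 0 := by
    rw [hy]
    intro h
    apply hEx
    have : ε ≠ 0 := by
      rcases lt_or_ge 0 l with hh | hh
      · simp [hε, hh]
      · simp [hε, not_lt.mpr hh]
    exact (smul_eq_zero.mp h).resolve_left this
  have hnormy : hnorm (hsmul G l x) = |l| * hnorm x := by
    rw [hy]
    rcases lt_or_ge 0 l with h | h
    · rw [hε]; simp only [if_pos h, one_smul]
      rw [hE, hhom, hs, Real.exp_log hlabs]
    · have h' : ¬ (0 < l) := not_lt.mpr h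
      rw [hε]; simp only [if_neg h', neg_smul, one_smul]
      rw [hhnormneg, hE, hhom, hs, Real.exp_log hlabs]
  have hxpos := hhnormpos x hx
  have hlog : Real.log (|l| * hnorm x) = s + Real.log (hnorm x) :=
    Real.log_mul (ne_of_gt hlabs) (ne_of_gt hxpos)
  -- compute
  rw [Phi, if_neg hyne, Phi, if_neg hx, hnormy, hy, Matrix.mulVec_smul, hlog]
  have hcomm : Commute ((-(s + Real.log (hnorm x))) • G) (s • G) := by
    simpa using (Commute.refl G).smul_left (-(s + Real.log (hnorm x))) |>.smul_right s
  rw [hE, Matrix.mulVec_mulVec, ← Matrix.exp_add_of_commute _ _ hcomm]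
  have harg : (-(s + Real.log (hnorm x))) • G + s • G = (-Real.log (hnorm x)) • G := by
    rw [← add_smul]; ring_nf
  rw [harg, smul_comm, smul_smul, smul_smul, ← mul_assoc, hεl]
end

section
/- Let d(s) = exp(sG) be a strictly monotone linear dilation with canonical homogeneous norm ‖·‖_d, let a > 0, and set Ω = { z : 1 ≤ ‖z‖_d < e^a }. Suppose a quantizer q : ℝⁿ → ℝⁿ satisfies q(exp(k·a·G)x) = exp(k·a·G)·q(x) for all k ∈ ℤ, x ∈ ℝⁿ, and ‖q(x) − x‖_d ≤ ε for all x ∈ Ω, where ‖·‖_d here denotes the homogeneous distance ‖q(x) ⊖ x‖_d computed as the homogeneous norm of the Euclidean difference. Then ‖q(x) − x‖_d ≤ ε·‖x‖_d for all x ∈ ℝⁿ \ {0}. -/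
open Matrix

/-- Upgrading a local quantization-error bound on the fundamental domain
`Ω = {z : 1 ≤ ‖z‖_d < e^a}` to a global sector bound, using discrete homogeneity
of the quantizer: if `q(exp(kaG)x) = exp(kaG) q(x)` and `‖q(x) − x‖_d ≤ ε` on `Ω`,
then `‖q(x) − x‖_d ≤ ε ‖x‖_d` for all `x ≠ 0`. -/
theorem local_to_global_sector_bound {n : ℕ} (G : Matrix (Fin n) (Fin n) ℝ)
    (a ε : ℝ) (ha : 0 < a) (hε : 0 ≤ ε)
    (hnorm : (Fin n → ℝ) → ℝ)
    (hscale : ∀ (s : ℝ) (v : Fin n → ℝ),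
      hnorm ((NormedSpace.exp (s • G)).mulVec v) = Real.exp s * hnorm v)
    (hproj : ∀ x : Fin n → ℝ, x ≠ 0 → ∃ k : ℤ,
      1 ≤ hnorm ((NormedSpace.exp ((-(k * a)) • G)).mulVec x) ∧
      hnorm ((NormedSpace.exp ((-(k * a)) • G)).mulVec x) < Real.exp a)
    (q : (Fin n → ℝ) → (Fin n → ℝ))
    (hqcomm : ∀ (k : ℤ) (x : Fin n → ℝ),
      q ((NormedSpace.exp ((k * a) • G)).mulVec x) =
        (NormedSpace.exp ((k * a) • G)).mulVec (q x))
    (hlocal : ∀ x : Fin n → ℝ,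
      1 ≤ hnorm x → hnorm x < Real.exp a → hnorm (q x - x) ≤ ε) :
    ∀ x : Fin n → ℝ, x ≠ 0 → hnorm (q x - x) ≤ ε * hnorm x := by
  intro x hx
  obtain ⟨k, h1, h2⟩ := hproj x hx
  set E := NormedSpace.exp (((k : ℝ) * a) • G) with hE
  set Einv := NormedSpace.exp ((-((k : ℝ) * a)) • G) with hEinv
  set y := Einv.mulVec x with hy
  have hEE : E * Einv = 1 := by
    have hc : Commute ((((k : ℝ) * a)) • G) ((-((k : ℝ) * a)) • G) :=
      ((Commute.refl G).smul_left _).smul_right _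
    have h := (Matrix.exp_add_of_commute _ _ hc).symm
    rw [hE, hEinv, h]
    simp
  have hEy : E.mulVec y = x := by
    rw [hy, Matrix.mulVec_mulVec, hEE, Matrix.one_mulVec]
  have key : hnorm (q x - x) = Real.exp ((k : ℝ) * a) * hnorm (q y - y) := by
    have hq : q x = E.mulVec (q y) := by
      conv_lhs => rw [← hEy]
      exact hqcomm k y
    rw [hq]
    conv_lhs => rw [← hEy]
    rw [← Matrix.mulVec_sub]
    exact hscale _ _
  have hle : hnorm (q y - y) ≤ ε := hlocal y h1 h2
  have hxn : hnorm x = Real.exp ((k : ℝ) * a) * hnorm y := by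
    rw [← hEy]; exact hscale _ _
  rw [key, hxn]
  have hepos : (0:ℝ) < Real.exp ((k : ℝ) * a) := Real.exp_pos _
  calc Real.exp ((k : ℝ) * a) * hnorm (q y - y)
      ≤ Real.exp ((k : ℝ) * a) * ε := by nlinarith
    _ ≤ ε * (Real.exp ((k : ℝ) * a) * hnorm y) := by nlinarith [mul_nonneg (mul_nonneg hε hepos.le) (sub_nonneg.mpr h1)]
end

section
/- Let V : ℝⁿ → [0,∞) be continuous, positive definite, C¹ away from 0, and suppose along every solution of a differential inclusion ẋ ∈ F(x) one has V̇ ≤ −ρ·V^{1+μ/m} whenever x ≠ 0, with ρ > 0, m > 0 and μ < 0. Then every solution reaches the origin in finite time, with settling time bounded by T(x₀) ≤ (m/(ρ·|μ|))·V(x₀)^{−μ/m}. -/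
open Set

lemma aux_dec {W : ℝ → ℝ} {c : ℝ} (hWc : Continuous W)
    (hd : ∀ r, 0 < W r → ∃ D, HasDerivAt W D r ∧ D ≤ -c)
    {s t : ℝ} (hst : s ≤ t) (hpos : ∀ r ∈ Icc s t, 0 < W r) :
    W t ≤ W s - c * (t - s) := by
  have key : AntitoneOn (fun r => W r + c * r) (Icc s t) := by
    apply antitoneOn_of_deriv_nonpos (convex_Icc s t)
    · exact (hWc.add (continuous_const.mul continuous_id)).continuousOn
    · intro r hr
      rw [interior_Icc] at hr
      obtain ⟨D, hD, _⟩ := hd r (hpos r (Ioo_subset_Icc_self hr))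
      exact ((hD.add ((hasDerivAt_id r).const_mul c)).differentiableAt).differentiableWithinAt
    · intro r hr
      rw [interior_Icc] at hr
      obtain ⟨D, hD, hDle⟩ := hd r (hpos r (Ioo_subset_Icc_self hr))
      have h1 : HasDerivAt (fun r => W r + c * r) (D + c) r := by
        exact (hD.add ((hasDerivAt_id r).const_mul c)).congr_deriv (by simp)
      rw [h1.deriv]; linarith
  have := key (left_mem_Icc.2 hst) (right_mem_Icc.2 hst) hst
  dsimp at this; linarith

lemma aux_stay {W : ℝ → ℝ} {c : ℝ} (hc : 0 < c) (hWc : Continuous W)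
    (hW0 : ∀ r, 0 ≤ W r)
    (hd : ∀ r, 0 < W r → ∃ D, HasDerivAt W D r ∧ D ≤ -c)
    {s t : ℝ} (hst : s ≤ t) (hs : W s = 0) : W t = 0 := by
  by_contra ht
  have htpos : 0 < W t := lt_of_le_of_ne (hW0 t) (Ne.symm ht)
  set K : Set ℝ := {r ∈ Icc s t | W r ≤ 0} with hK
  have hKne : K.Nonempty := ⟨s, ⟨left_mem_Icc.2 hst, le_of_eq hs⟩⟩
  have hKc : IsCompact K :=
    (isCompact_Icc).of_isClosed_subset
      ((isClosed_Icc).inter (isClosed_le hWc continuous_const)) (fun r hr => hr.1)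
  obtain ⟨u, huK, hub⟩ := hKc.exists_isGreatest hKne
  obtain ⟨⟨hsu, hut⟩, hWu⟩ := huK
  have hWu0 : W u = 0 := le_antisymm hWu (hW0 u)
  have hult : u < t := by
    rcases lt_or_eq_of_le hut with h | h
    · exact h
    · exfalso; rw [h] at hWu0; rw [hWu0] at htpos; exact lt_irrefl 0 htpos
  have hposmid : ∀ r, u < r → r ≤ t → 0 < W r := by
    intro r hur hrt
    rcases lt_or_ge 0 (W r) with h | h
    · exact h
    · exact absurd (hub ⟨⟨hsu.trans hur.le, hrt⟩, h⟩) (not_le.2 hur)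
  have key : ∀ u' ∈ Ioc u t, W t + c * t ≤ W u' + c * u' := by
    intro u' ⟨huu', hu't⟩
    have := aux_dec hWc hd hu't (fun r hr => hposmid r (lt_of_lt_of_le huu' hr.1) hr.2)
    linarith
  have hlim : Filter.Tendsto (fun u' => W u' + c * u') (nhdsWithin u (Ioc u t))
      (nhds (W u + c * u)) :=
    ((hWc.add (continuous_const.mul continuous_id)).tendsto u).mono_left nhdsWithin_le_nhds
  have hne : (nhdsWithin u (Ioc u t)).NeBot := by
    have h1 : (nhdsWithin u (Ioo u t)).NeBot := left_nhdsWithin_Ioo_neBot hult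
    exact h1.mono (nhdsWithin_mono u Ioo_subset_Ioc_self)
  have : W t + c * t ≤ W u + c * u :=
    ge_of_tendsto hlim (Filter.eventually_of_mem self_mem_nhdsWithin key)
  rw [hWu0] at this
  nlinarith

/-- Finite-time stability from the homogeneous Lyapunov inequality with negative
degree: if along every solution of `ẋ ∈ F(x)` one has `V̇ ≤ −ρ V^{1+μ/m}` away from
the origin (with `ρ > 0`, `m > 0`, `μ < 0`), then every solution reaches the origin
within time `T(x₀) ≤ (m/(ρ|μ|)) V(x₀)^{−μ/m}`. -/
theorem finite_time_stability {E : Type*} [NormedAddCommGroup E] [NormedSpace ℝ E]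
    (F : E → Set E) (V : E → ℝ) (ρ m μ : ℝ)
    (hρ : 0 < ρ) (hm : 0 < m) (hμ : μ < 0)
    (hVc : Continuous V) (hVnonneg : ∀ x : E, 0 ≤ V x)
    (hVpd : ∀ x : E, V x = 0 ↔ x = 0)
    (hVC1 : ContDiffOn ℝ 1 V {x : E | x ≠ 0})
    (hdec : ∀ x x' : ℝ → E, (∀ t : ℝ, HasDerivAt x (x' t) t ∧ x' t ∈ F (x t)) →
      ∀ t : ℝ, x t ≠ 0 → ∀ D : ℝ, HasDerivAt (fun s => V (x s)) D t →
        D ≤ -ρ * Real.rpow (V (x t)) (1 + μ / m)) :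
    ∀ x x' : ℝ → E, (∀ t : ℝ, HasDerivAt x (x' t) t ∧ x' t ∈ F (x t)) →
      ∀ t : ℝ, (m / (ρ * |μ|)) * Real.rpow (V (x 0)) (-μ / m) ≤ t → x t = 0 := by
  intro x x' hsol t ht
  set α : ℝ := -μ / m with hα
  have hα0 : 0 < α := div_pos (neg_pos.2 hμ) hm
  set c : ℝ := ρ * α with hc
  have hcpos : 0 < c := mul_pos hρ hα0
  set W : ℝ → ℝ := fun s => Real.rpow (V (x s)) α with hWdef
  have hxc : Continuous x :=
    continuous_iff_continuousAt.2 fun r => (hsol r).1.differentiableAt.continuousAt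
  have hWc : Continuous W :=
    (Real.continuous_rpow_const hα0.le).comp (hVc.comp hxc)
  have hW0 : ∀ r, 0 ≤ W r := fun r => Real.rpow_nonneg (hVnonneg _) α
  have hWzero : ∀ r, W r = 0 ↔ x r = 0 := by
    intro r
    constructor
    · intro h
      exact (hVpd _).1 ((Real.rpow_eq_zero_iff_of_nonneg (hVnonneg (x r))).1 h).1
    · intro h
      show Real.rpow (V (x r)) α = 0
      rw [(hVpd _).2 h]
      exact Real.zero_rpow (ne_of_gt hα0)
  have hd : ∀ r, 0 < W r → ∃ D, HasDerivAt W D r ∧ D ≤ -c := by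
    intro r hr
    have hxr : x r ≠ 0 := by
      intro h
      rw [(hWzero r).2 h] at hr; exact lt_irrefl 0 hr
    have hVr : 0 < V (x r) :=
      (hVnonneg _).lt_of_ne' fun h => hxr ((hVpd _).1 h)
    have hopen : IsOpen {y : E | y ≠ 0} := isOpen_ne
    have hVd : DifferentiableAt ℝ V (x r) :=
      (hVC1.contDiffAt (hopen.mem_nhds hxr)).differentiableAt one_ne_zero
    have hg : HasDerivAt (fun s => V (x s)) (fderiv ℝ V (x r) (x' r)) r :=
      hVd.hasFDerivAt.comp_hasDerivAt r (hsol r).1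
    set D0 : ℝ := fderiv ℝ V (x r) (x' r) with hD0
    have hDle : D0 ≤ -ρ * Real.rpow (V (x r)) (1 + μ / m) :=
      hdec x x' hsol r hxr D0 hg
    have hWr : HasDerivAt W (D0 * α * (V (x r)) ^ (α - 1)) r :=
      hg.rpow_const (Or.inl (ne_of_gt hVr))
    refine ⟨_, hWr, ?_⟩
    have hpow : (0:ℝ) ≤ (V (x r)) ^ (α - 1) := Real.rpow_nonneg (hVnonneg _) _
    have h1 : D0 * α * (V (x r)) ^ (α - 1) ≤
        (-ρ * (V (x r)) ^ (1 + μ / m)) * α * (V (x r)) ^ (α - 1) := by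
      apply mul_le_mul_of_nonneg_right _ hpow
      exact mul_le_mul_of_nonneg_right hDle hα0.le
    have h2 : (V (x r)) ^ (1 + μ / m) * (V (x r)) ^ (α - 1) = 1 := by
      rw [← Real.rpow_add hVr]
      have : 1 + μ / m + (α - 1) = 0 := by rw [hα]; ring
      rw [this, Real.rpow_zero]
    calc D0 * α * (V (x r)) ^ (α - 1) ≤
        (-ρ * (V (x r)) ^ (1 + μ / m)) * α * (V (x r)) ^ (α - 1) := h1
      _ = -ρ * α * ((V (x r)) ^ (1 + μ / m) * (V (x r)) ^ (α - 1)) := by ring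
      _ = -c := by rw [h2, hc]; ring
  -- rewrite the time bound
  have habs : |μ| = -μ := abs_of_neg hμ
  have hmne : m ≠ 0 := ne_of_gt hm
  have hρne : ρ ≠ 0 := ne_of_gt hρ
  have hμne : μ ≠ 0 := ne_of_lt hμ
  have hcT : c * (m / (ρ * |μ|)) = 1 := by
    rw [habs, hc, hα]; field_simp
  have hT0 : 0 ≤ (m / (ρ * |μ|)) * Real.rpow (V (x 0)) (-μ / m) := by
    apply mul_nonneg _ (Real.rpow_nonneg (hVnonneg _) _)
    apply div_nonneg hm.le
    apply mul_nonneg hρ.le (abs_nonneg μ)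
  have ht0 : (0:ℝ) ≤ t := le_trans hT0 ht
  by_cases hex : ∃ r ∈ Icc (0:ℝ) t, W r = 0
  · obtain ⟨r, hrmem, hr0⟩ := hex
    exact (hWzero t).1 (aux_stay hcpos hWc hW0 hd hrmem.2 hr0)
  · push_neg at hex
    have hpos : ∀ r ∈ Icc (0:ℝ) t, 0 < W r :=
      fun r hr => lt_of_le_of_ne (hW0 r) (Ne.symm (hex r hr))
    have hdec2 := aux_dec hWc hd ht0 hpos
    exfalso
    have hWt : 0 < W t := hpos t (right_mem_Icc.2 ht0)
    have hW0eq : W 0 = Real.rpow (V (x 0)) (-μ / m) := by rw [hWdef]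
    have hct : W 0 ≤ c * t := by
      have := mul_le_mul_of_nonneg_left ht hcpos.le
      rw [← mul_assoc, hcT, one_mul] at this
      rw [hW0eq]; exact this
    simp only [sub_zero] at hdec2
    linarith
end
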